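/- Under the greedy policy, for all t ≥ 1 and n ≥ (2 + γ/μ)², Pr(|R_G(n) − n/2| > t√n) ≤ 2 exp(−(μ/(2γ))² t). -/

import Mathlib

open MeasureTheory Filter ProbabilityTheory

lemma aux_integrable {Ω : Type*} [MeasurableSpace Ω] {P : Measure Ω} [IsFiniteMeasure P]
    {f : Ω → ℝ} {C : ℝ} (hm : Measurable f) (hb : ∀ ω, |f ω| ≤ C) : Integrable f P :=
  ⟨hm.aestronglyMeasurable, HasFiniteIntegral.of_bounded (C := C)
    (ae_of_all _ (by simpa [Real.norm_eq_abs] using hb))⟩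

lemma aux_reindex {Ω β ι ι' : Type*} [MeasurableSpace Ω] [MeasurableSpace β] {P : Measure Ω}
    [Nonempty ι'] {f : ι → Ω → β} (h : iIndepFun f P)
    {g : ι' → ι} (hg : Function.Injective g) :
    iIndepFun (fun i => f (g i)) P := by
  rw [iIndepFun_iff_measure_inter_preimage_eq_mul] at h ⊢
  intro S sets hsets
  classical
  have key := h (S.map ⟨g, hg⟩) (sets := fun i => sets (Function.invFun g i))
    (by
      intro i hi
      rw [Finset.mem_map] at hi
      obtain ⟨j, hj, rfl⟩ := hi
      simp only [Function.Embedding.coeFn_mk]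
      rw [Function.leftInverse_invFun hg j]
      exact hsets j hj)
  have h1 : (⋂ i ∈ S.map ⟨g, hg⟩, f i ⁻¹' sets (Function.invFun g i))
      = ⋂ j ∈ S, f (g j) ⁻¹' sets j := by
    ext ω
    simp only [Set.mem_iInter, Finset.mem_map, Function.Embedding.coeFn_mk,
      forall_exists_index, and_imp]
    constructor
    · intro H j hj
      have := H (g j) j hj rfl
      rwa [Function.leftInverse_invFun hg j] at this
    · rintro H i j hj rfl
      rw [Function.leftInverse_invFun hg j]
      exact H j hj
  have h2 : (∏ i ∈ S.map ⟨g, hg⟩, P (f i ⁻¹' sets (Function.invFun g i)))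
      = ∏ j ∈ S, P (f (g j) ⁻¹' sets j) := by
    rw [Finset.prod_map]
    exact Finset.prod_congr rfl fun j _ => by
      rw [Function.Embedding.coeFn_mk, Function.leftInverse_invFun hg j]
  rw [h1, h2] at key
  exact key

lemma exp_le_chord {y c : ℝ} (hc : 0 < c) (hy : |y| ≤ c) (s : ℝ) :
    Real.exp (s * y) ≤ (Real.exp (s * c) + Real.exp (-(s * c))) / 2
      + y * ((Real.exp (s * c) - Real.exp (-(s * c))) / (2 * c)) := by
  obtain ⟨hy1, hy2⟩ := abs_le.1 hy
  have ha : (0:ℝ) ≤ (c + y) / (2 * c) := div_nonneg (by linarith) (by linarith)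
  have hb : (0:ℝ) ≤ (c - y) / (2 * c) := div_nonneg (by linarith) (by linarith)
  have hab : (c + y) / (2 * c) + (c - y) / (2 * c) = 1 := by field_simp; ring
  have key := convexOn_exp.2 (Set.mem_univ (s * c)) (Set.mem_univ (-(s * c))) ha hb hab
  simp only [smul_eq_mul] at key
  have h1 : (c + y) / (2 * c) * (s * c) + (c - y) / (2 * c) * (-(s * c)) = s * y := by
    field_simp; ring
  rw [h1] at key
  calc Real.exp (s * y) ≤ (c + y) / (2 * c) * Real.exp (s * c)
        + (c - y) / (2 * c) * Real.exp (-(s * c)) := key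
    _ = (Real.exp (s * c) + Real.exp (-(s * c))) / 2
        + y * ((Real.exp (s * c) - Real.exp (-(s * c))) / (2 * c)) := by
      field_simp; ring

lemma mgf_le_of_bounded {Ω : Type*} [MeasurableSpace Ω] {P : Measure Ω} [IsProbabilityMeasure P]
    {Y : Ω → ℝ} {γ : ℝ} (hγ : 0 < γ) (hm : Measurable Y)
    (hmean : ∫ ω, Y ω ∂P = 0) (hb : ∀ ω, |Y ω| ≤ γ) (s : ℝ) :
    mgf Y P s ≤ Real.exp (s ^ 2 * γ ^ 2 / 2) := by
  have hint : Integrable Y P := aux_integrable hm hb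
  have h1 : mgf Y P s ≤ (Real.exp (s * γ) + Real.exp (-(s * γ))) / 2 := by
    have hle : ∀ ω, Real.exp (s * Y ω) ≤ (Real.exp (s * γ) + Real.exp (-(s * γ))) / 2
        + Y ω * ((Real.exp (s * γ) - Real.exp (-(s * γ))) / (2 * γ)) :=
      fun ω => exp_le_chord hγ (hb ω) s
    have hint2 : Integrable (fun ω => (Real.exp (s * γ) + Real.exp (-(s * γ))) / 2
        + Y ω * ((Real.exp (s * γ) - Real.exp (-(s * γ))) / (2 * γ))) P :=
      (integrable_const _).add (hint.mul_const _)
    have hintexp : Integrable (fun ω => Real.exp (s * Y ω)) P := by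
      refine aux_integrable (hm.const_mul s).exp (C := Real.exp (|s| * γ)) fun ω => ?_
      rw [abs_of_pos (Real.exp_pos _), Real.exp_le_exp]
      calc s * Y ω ≤ |s * Y ω| := le_abs_self _
        _ = |s| * |Y ω| := abs_mul _ _
        _ ≤ |s| * γ := by exact mul_le_mul_of_nonneg_left (hb ω) (abs_nonneg s)
    calc mgf Y P s = ∫ ω, Real.exp (s * Y ω) ∂P := rfl
      _ ≤ ∫ ω, ((Real.exp (s * γ) + Real.exp (-(s * γ))) / 2
          + Y ω * ((Real.exp (s * γ) - Real.exp (-(s * γ))) / (2 * γ))) ∂P :=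
        integral_mono hintexp hint2 hle
      _ = (Real.exp (s * γ) + Real.exp (-(s * γ))) / 2
          + (∫ ω, Y ω ∂P) * ((Real.exp (s * γ) - Real.exp (-(s * γ))) / (2 * γ)) := by
        rw [integral_add (integrable_const _) (hint.mul_const _), integral_const,
          integral_mul_const]
        simp
      _ = (Real.exp (s * γ) + Real.exp (-(s * γ))) / 2 := by rw [hmean]; ring
  calc mgf Y P s ≤ (Real.exp (s * γ) + Real.exp (-(s * γ))) / 2 := h1
    _ = Real.cosh (s * γ) := by rw [Real.cosh_eq]
    _ ≤ Real.exp ((s * γ) ^ 2 / 2) := Real.cosh_le_exp_half_sq _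
    _ = Real.exp (s ^ 2 * γ ^ 2 / 2) := by ring_nf

lemma hoeffding_aux {Ω : Type*} [MeasurableSpace Ω] (P : Measure Ω) [IsProbabilityMeasure P]
    (Y : ℕ → Ω → ℝ) (n : ℕ) (hn : 0 < n) {γ ε : ℝ} (hγ : 0 < γ) (hε : 0 < ε)
    (hmeas : ∀ i, Measurable (Y i))
    (hindep : iIndepFun Y P)
    (hmean : ∀ i, ∫ ω, Y i ω ∂P = 0) (hb : ∀ i ω, |Y i ω| ≤ γ) :
    P {ω | ε ≤ ∑ i ∈ Finset.range n, Y i ω}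
      ≤ ENNReal.ofReal (Real.exp (-ε ^ 2 / (2 * n * γ ^ 2))) := by
  set s : ℝ := ε / (n * γ ^ 2) with hs_def
  have hnpos : (0:ℝ) < n := Nat.cast_pos.2 hn
  have hs : 0 < s := div_pos hε (by positivity)
  have hinti : ∀ i, Integrable (fun ω => Real.exp (s * Y i ω)) P := by
    intro i
    refine aux_integrable ((hmeas i).const_mul s).exp (C := Real.exp (|s| * γ)) fun ω => ?_
    rw [abs_of_pos (Real.exp_pos _), Real.exp_le_exp]
    calc s * Y i ω ≤ |s * Y i ω| := le_abs_self _
      _ = |s| * |Y i ω| := abs_mul _ _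
      _ ≤ |s| * γ := mul_le_mul_of_nonneg_left (hb i ω) (abs_nonneg s)
  have hintsum : Integrable (fun ω => Real.exp (s * (∑ i ∈ Finset.range n, Y i) ω)) P :=
    hindep.integrable_exp_mul_sum hmeas fun i _ => hinti i
  have hcher := measure_ge_le_exp_mul_mgf (μ := P) (X := ∑ i ∈ Finset.range n, Y i)
    (t := s) ε hs.le hintsum
  have hmgf : mgf (∑ i ∈ Finset.range n, Y i) P s ≤ Real.exp (n * (s ^ 2 * γ ^ 2 / 2)) := by
    rw [hindep.mgf_sum hmeas]
    calc ∏ i ∈ Finset.range n, mgf (Y i) P s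
        ≤ ∏ _i ∈ Finset.range n, Real.exp (s ^ 2 * γ ^ 2 / 2) :=
          Finset.prod_le_prod (fun i _ => mgf_nonneg)
            (fun i _ => mgf_le_of_bounded hγ (hmeas i) (hmean i) (hb i) s)
      _ = Real.exp (n * (s ^ 2 * γ ^ 2 / 2)) := by
          rw [Finset.prod_const, Finset.card_range, ← Real.exp_nat_mul]
  have hbound : (P {ω | ε ≤ (∑ i ∈ Finset.range n, Y i) ω}).toReal
      ≤ Real.exp (-ε ^ 2 / (2 * n * γ ^ 2)) := by
    calc (P {ω | ε ≤ (∑ i ∈ Finset.range n, Y i) ω}).toReal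
        ≤ Real.exp (-s * ε) * mgf (∑ i ∈ Finset.range n, Y i) P s := hcher
      _ ≤ Real.exp (-s * ε) * Real.exp (n * (s ^ 2 * γ ^ 2 / 2)) := by
          exact mul_le_mul_of_nonneg_left hmgf (Real.exp_pos _).le
      _ = Real.exp (-s * ε + n * (s ^ 2 * γ ^ 2 / 2)) := (Real.exp_add _ _).symm
      _ = Real.exp (-ε ^ 2 / (2 * n * γ ^ 2)) := by
          congr 1
          rw [hs_def]
          field_simp
          ring
  have hset : {ω | ε ≤ ∑ i ∈ Finset.range n, Y i ω}
      = {ω | ε ≤ (∑ i ∈ Finset.range n, Y i) ω} := by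
    ext ω; simp [Finset.sum_apply]
  rw [hset, ← ENNReal.ofReal_toReal (measure_ne_top P _)]
  exact ENNReal.ofReal_le_ofReal hbound

lemma tail_bound {Ω : Type*} [MeasurableSpace Ω] (P : Measure Ω) [IsProbabilityMeasure P]
    (A B : ℕ → Ω → ℝ) {γ μ : ℝ} (hγ : 0 < γ) (hμ0 : 0 ≤ μ) (hμγ : μ ≤ γ)
    (hmA : ∀ i, Measurable (A i)) (hmB : ∀ i, Measurable (B i))
    (hbA : ∀ i ω, A i ω ∈ Set.Icc (0 : ℝ) γ) (hbB : ∀ i ω, B i ω ∈ Set.Icc (0 : ℝ) γ)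
    (hmeanA : ∀ i, ∫ ω, A i ω ∂P = μ) (hmeanB : ∀ i, ∫ ω, B i ω ∂P = μ)
    (hindep : iIndepFun (Sum.elim A B) P)
    (k₀ n : ℕ) (hk₀n : k₀ ≤ n) (hn : 0 < n) {ε : ℝ} (hε : 0 < ε)
    (hεle : ε + γ ≤ ((k₀ : ℝ) - ((n - k₀ : ℕ) : ℝ)) * μ) :
    P {ω | (∑ i ∈ Finset.range k₀, A i ω) ≤ (∑ j ∈ Finset.range (n - k₀), B j ω) + γ}
      ≤ ENNReal.ofReal (Real.exp (-ε ^ 2 / (2 * n * γ ^ 2))) := by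
  classical
  set m : ℕ := n - k₀ with hm_def
  set Y : ℕ → Ω → ℝ := fun i ω => if i < m then B i ω - μ else μ - A (i - m) ω with hY_def
  set φ : ℕ → ℕ ⊕ ℕ := fun i => if i < m then Sum.inr i else Sum.inl (i - m) with hφ_def
  have hφinj : Function.Injective φ := by
    intro a b hab
    simp only [hφ_def] at hab
    by_cases ha : a < m <;> by_cases hb' : b < m <;> simp [ha, hb'] at hab
    · exact hab
    · omega
  have hYmeas : ∀ i, Measurable (Y i) := by
    intro i
    by_cases hi : i < m
    · simpa [hY_def, hi] using (hmB i).sub_const μ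
    · simpa [hY_def, hi] using (hmA (i - m)).const_sub μ
  have hYindep : iIndepFun Y P := by
    have h1 : iIndepFun (fun i => Sum.elim A B (φ i)) P :=
      aux_reindex hindep hφinj
    have h2 := h1.comp (fun i (y : ℝ) => if i < m then y - μ else μ - y)
      (fun i => by
        by_cases hi : i < m <;> simp only [hi, if_true, if_false]
        · exact measurable_id.sub measurable_const
        · exact measurable_const.sub measurable_id)
    convert h2 using 2 with i
    by_cases hi : i < m <;> ext ω <;> simp [hY_def, hφ_def, hi]
  have hYmean : ∀ i, ∫ ω, Y i ω ∂P = 0 := by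
    intro i
    by_cases hi : i < m
    · simp only [hY_def, hi, if_true]
      rw [integral_sub (aux_integrable (hmB i)
          (fun ω => abs_le.2 ⟨by linarith [(hbB i ω).1], (hbB i ω).2⟩)) (integrable_const _)]
      simp [hmeanB i]
    · simp only [hY_def, hi, if_false]
      rw [integral_sub (integrable_const _) (aux_integrable (hmA (i - m))
          (fun ω => abs_le.2 ⟨by linarith [(hbA (i - m) ω).1], (hbA (i - m) ω).2⟩))]
      simp [hmeanA (i - m)]
  have hYb : ∀ i ω, |Y i ω| ≤ γ := by
    intro i ω
    by_cases hi : i < m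
    · simp only [hY_def, hi, if_true]
      exact abs_le.2 ⟨by linarith [(hbB i ω).1], by linarith [(hbB i ω).2]⟩
    · simp only [hY_def, hi, if_false]
      exact abs_le.2 ⟨by linarith [(hbA (i - m) ω).2], by linarith [(hbA (i - m) ω).1]⟩
  have hsum : ∀ ω, ∑ i ∈ Finset.range n, Y i ω
      = (∑ j ∈ Finset.range m, B j ω) - (∑ i ∈ Finset.range k₀, A i ω)
        + ((k₀ : ℝ) - (m : ℝ)) * μ := by
    intro ω
    have hnm : n = m + k₀ := by omega
    rw [hnm, Finset.sum_range_add]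
    have e1 : ∑ i ∈ Finset.range m, Y i ω = (∑ j ∈ Finset.range m, B j ω) - m * μ := by
      have : ∀ i ∈ Finset.range m, Y i ω = B i ω - μ := by
        intro i hi; simp [hY_def, Finset.mem_range.1 hi]
      rw [Finset.sum_congr rfl this, Finset.sum_sub_distrib, Finset.sum_const,
        Finset.card_range, nsmul_eq_mul]
    have e2 : ∑ i ∈ Finset.range k₀, Y (m + i) ω
        = k₀ * μ - ∑ i ∈ Finset.range k₀, A i ω := by
      have : ∀ i ∈ Finset.range k₀, Y (m + i) ω = μ - A i ω := by
        intro i hi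
        have h1 : ¬ (m + i < m) := by omega
        simp [hY_def, h1]
      rw [Finset.sum_congr rfl this, Finset.sum_sub_distrib, Finset.sum_const,
        Finset.card_range, nsmul_eq_mul]
    rw [e1, e2]; ring
  have hsubset : {ω | (∑ i ∈ Finset.range k₀, A i ω) ≤ (∑ j ∈ Finset.range m, B j ω) + γ}
      ⊆ {ω | ε ≤ ∑ i ∈ Finset.range n, Y i ω} := by
    intro ω hω
    simp only [Set.mem_setOf_eq] at hω ⊢
    rw [hsum ω]
    have : (m : ℝ) = ((n - k₀ : ℕ) : ℝ) := by rw [hm_def]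
    nlinarith [hεle]
  calc P {ω | (∑ i ∈ Finset.range k₀, A i ω) ≤ (∑ j ∈ Finset.range m, B j ω) + γ}
      ≤ P {ω | ε ≤ ∑ i ∈ Finset.range n, Y i ω} := measure_mono hsubset
    _ ≤ ENNReal.ofReal (Real.exp (-ε ^ 2 / (2 * n * γ ^ 2))) :=
        hoeffding_aux P Y n hn hγ hε hYmeas hYindep hYmean hYb

set_option maxHeartbeats 1000000 in
/-- Exponential tail bound for the greedy selection count: for `t ≥ 1` and
`n ≥ (2 + γ/μ)²`, `Pr(|R_G(n) - n/2| > t√n) ≤ 2 exp(-(μ/(2γ))² t)`. -/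
theorem greedy_selection_tail_bound
    {Ω : Type} [MeasurableSpace Ω] (P : Measure Ω) [IsProbabilityMeasure P]
    (XR XS : ℕ → Ω → ℝ) (γ μ vR vS : ℝ)
    (hγ : 0 < γ) (hμ : 0 < μ) (hv : 0 < vR + vS)
    (hmR : ∀ i, Measurable (XR i)) (hmS : ∀ i, Measurable (XS i))
    (hbR : ∀ i ω, XR i ω ∈ Set.Icc (0 : ℝ) γ) (hbS : ∀ i ω, XS i ω ∈ Set.Icc (0 : ℝ) γ)
    (hidR : ∀ i, P.map (XR i) = P.map (XR 0)) (hidS : ∀ i, P.map (XS i) = P.map (XS 0))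
    (hindep : ProbabilityTheory.iIndepFun (Sum.elim XR XS) P)
    (hmeanR : ∫ ω, XR 0 ω ∂P = μ) (hmeanS : ∫ ω, XS 0 ω ∂P = μ)
    (hvR : ProbabilityTheory.variance (XR 0) P = vR)
    (hvS : ProbabilityTheory.variance (XS 0) P = vS)
    (RG : ℕ → Ω → ℕ) (hRGmeas : ∀ n, Measurable (RG n)) (hRG0 : ∀ ω, RG 0 ω = 0)
    (hstep : ∀ n ω, RG (n + 1) ω = RG n ω ∨ RG (n + 1) ω = RG n ω + 1)
    (hg1 : ∀ n ω, (∑ i ∈ Finset.range (RG n ω), XR i ω)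
        < ∑ j ∈ Finset.range (n - RG n ω), XS j ω → RG (n + 1) ω = RG n ω + 1)
    (hg0 : ∀ n ω, (∑ j ∈ Finset.range (n - RG n ω), XS j ω)
        < ∑ i ∈ Finset.range (RG n ω), XR i ω → RG (n + 1) ω = RG n ω)
    (hgeq : ∀ n ω, (∑ j ∈ Finset.range (n - RG n ω), XS j ω)
        = ∑ i ∈ Finset.range (RG n ω), XR i ω → RG (n + 1) ω = RG n ω + 1) :
    ∀ t : ℝ, 1 ≤ t → ∀ n : ℕ, (2 + γ / μ) ^ 2 ≤ (n : ℝ) →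
      P {ω | t * Real.sqrt n < |(RG n ω : ℝ) - n / 2|}
        ≤ ENNReal.ofReal (2 * Real.exp (-(μ / (2 * γ)) ^ 2 * t)) := by
  -- preliminary facts
  have hμγ : μ ≤ γ := by
    rw [← hmeanR]
    calc ∫ ω, XR 0 ω ∂P ≤ ∫ _ω, γ ∂P :=
        integral_mono (aux_integrable (hmR 0)
          (fun ω => abs_le.2 ⟨by linarith [(hbR 0 ω).1], (hbR 0 ω).2⟩))
          (integrable_const _) (fun ω => (hbR 0 ω).2)
      _ = γ := by simp
  have eR : ∀ j, ∫ y, y ∂(P.map (XR j)) = ∫ x, XR j x ∂P := fun j => by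
    simpa using integral_map (hmR j).aemeasurable
      (aestronglyMeasurable_id (μ := P.map (XR j)))
  have eS : ∀ j, ∫ y, y ∂(P.map (XS j)) = ∫ x, XS j x ∂P := fun j => by
    simpa using integral_map (hmS j).aemeasurable
      (aestronglyMeasurable_id (μ := P.map (XS j)))
  have hmeanR' : ∀ i, ∫ ω, XR i ω ∂P = μ := by
    intro i
    rw [← hmeanR, ← eR i, hidR i, eR 0]
  have hmeanS' : ∀ i, ∫ ω, XS i ω ∂P = μ := by
    intro i
    rw [← hmeanS, ← eS i, hidS i, eS 0]
  have hswapinj : Function.Injective (@Sum.swap ℕ ℕ) := fun a b h => by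
    rw [← Sum.swap_swap a, h, Sum.swap_swap]
  have hindepS : iIndepFun (Sum.elim XS XR) P := by
    have h := aux_reindex hindep (g := @Sum.swap ℕ ℕ) hswapinj
    convert h using 2 with i
    cases i <;> rfl
  have RG_le : ∀ N ω, RG N ω ≤ N := by
    intro N ω
    induction N with
    | zero => simp [hRG0 ω]
    | succ N ih => rcases hstep N ω with h | h <;> omega
  -- the sandwich lemma (Lemma 3.1)
  have sandwich : ∀ N ω,
      (∑ i ∈ Finset.range (RG N ω), XR i ω)
        ≤ (∑ j ∈ Finset.range (N - RG N ω), XS j ω) + γ ∧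
      (∑ j ∈ Finset.range (N - RG N ω), XS j ω)
        ≤ (∑ i ∈ Finset.range (RG N ω), XR i ω) + γ := by
    intro N ω
    induction N with
    | zero => simp [hRG0 ω, hγ.le]
    | succ N ih =>
      have hkN : RG N ω ≤ N := RG_le N ω
      rcases lt_trichotomy (∑ i ∈ Finset.range (RG N ω), XR i ω)
        (∑ j ∈ Finset.range (N - RG N ω), XS j ω) with hlt | heq | hgt
      · have hR := hg1 N ω hlt
        have hsub : N + 1 - (RG N ω + 1) = N - RG N ω := by omega
        rw [hR, hsub, Finset.sum_range_succ]
        have h1 := (hbR (RG N ω) ω).1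
        have h2 := (hbR (RG N ω) ω).2
        exact ⟨by linarith, by linarith [ih.2]⟩
      · have hR := hgeq N ω heq.symm
        have hsub : N + 1 - (RG N ω + 1) = N - RG N ω := by omega
        rw [hR, hsub, Finset.sum_range_succ]
        have h1 := (hbR (RG N ω) ω).1
        have h2 := (hbR (RG N ω) ω).2
        exact ⟨by linarith, by linarith⟩
      · have hR := hg0 N ω hgt
        have hsub : N + 1 - RG N ω = (N - RG N ω) + 1 := by omega
        rw [hR, hsub, Finset.sum_range_succ]
        have h1 := (hbS (N - RG N ω) ω).1
        have h2 := (hbS (N - RG N ω) ω).2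
        exact ⟨by linarith [ih.1], by linarith⟩
  intro t ht n hn
  have hsqnn : (0:ℝ) ≤ Real.sqrt n := Real.sqrt_nonneg _
  have hsq : 2 + γ / μ ≤ Real.sqrt n := by
    have h1 : (0:ℝ) ≤ 2 + γ / μ := by positivity
    calc (2 + γ / μ) = Real.sqrt ((2 + γ / μ) ^ 2) := (Real.sqrt_sq h1).symm
      _ ≤ Real.sqrt n := Real.sqrt_le_sqrt hn
  have hγμ : (0:ℝ) < γ / μ := div_pos hγ hμ
  have hn4 : (4:ℝ) ≤ (n:ℝ) := by nlinarith
  have hnpos : 0 < n := by exact_mod_cast (by linarith : (0:ℝ) < n)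
  have hsqpos : 0 < Real.sqrt n := Real.sqrt_pos.2 (by positivity)
  by_cases hdeg : (n:ℝ) / 2 + t * Real.sqrt n < n
  · -- main case
    set k₀ : ℕ := Nat.floor ((n:ℝ) / 2 + t * Real.sqrt n) + 1 with hk₀_def
    have htn0 : (0:ℝ) ≤ (n:ℝ) / 2 + t * Real.sqrt n := by positivity
    have hk₀n : k₀ ≤ n := by
      have := (Nat.floor_lt htn0).2 hdeg
      omega
    have hk₀gt : (n:ℝ) / 2 + t * Real.sqrt n < k₀ := by
      have := Nat.lt_floor_add_one ((n:ℝ) / 2 + t * Real.sqrt n)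
      push_cast
      exact_mod_cast this
    have hmcast : ((n - k₀ : ℕ) : ℝ) = (n:ℝ) - k₀ := by
      push_cast [Nat.cast_sub hk₀n]; ring
    set ε : ℝ := t * μ * Real.sqrt n with hε_def
    have hε : 0 < ε := by positivity
    have hμsq : 2 * μ + γ ≤ μ * Real.sqrt n := by
      have := mul_le_mul_of_nonneg_left hsq hμ.le
      calc 2 * μ + γ = μ * (2 + γ / μ) := by field_simp
        _ ≤ μ * Real.sqrt n := this
    have hεle : ε + γ ≤ ((k₀ : ℝ) - ((n - k₀ : ℕ) : ℝ)) * μ := by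
      rw [hmcast]
      have h1 : 2 * (t * Real.sqrt n) ≤ ((k₀:ℝ) - ((n:ℝ) - k₀)) := by linarith
      have h2 : γ ≤ t * (μ * Real.sqrt n) := by nlinarith
      have h3 : 2 * (t * Real.sqrt n) * μ ≤ ((k₀:ℝ) - ((n:ℝ) - k₀)) * μ :=
        mul_le_mul_of_nonneg_right h1 hμ.le
      nlinarith
    have hB1 := tail_bound P XR XS hγ hμ.le hμγ hmR hmS hbR hbS hmeanR' hmeanS'
      hindep k₀ n hk₀n hnpos hε hεle
    have hB2 := tail_bound P XS XR hγ hμ.le hμγ hmS hmR hbS hbR hmeanS' hmeanR'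
      hindepS k₀ n hk₀n hnpos hε hεle
    have hsubset : {ω | t * Real.sqrt n < |(RG n ω : ℝ) - n / 2|}
        ⊆ {ω | (∑ i ∈ Finset.range k₀, XR i ω)
            ≤ (∑ j ∈ Finset.range (n - k₀), XS j ω) + γ}
          ∪ {ω | (∑ i ∈ Finset.range k₀, XS i ω)
            ≤ (∑ j ∈ Finset.range (n - k₀), XR j ω) + γ} := by
      intro ω hω
      simp only [Set.mem_setOf_eq, Set.mem_union] at hω ⊢
      have hRGn : RG n ω ≤ n := RG_le n ω
      rcases lt_abs.1 hω with hup | hdown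
      · -- upper tail: RG n ω ≥ k₀
        left
        have hgtk : (n:ℝ) / 2 + t * Real.sqrt n < RG n ω := by linarith
        have hk₀le : k₀ ≤ RG n ω := by
          have : Nat.floor ((n:ℝ) / 2 + t * Real.sqrt n) < RG n ω :=
            (Nat.floor_lt htn0).2 (by exact_mod_cast hgtk)
          omega
        have hs := (sandwich n ω).1
        have mono1 : (∑ i ∈ Finset.range k₀, XR i ω)
            ≤ ∑ i ∈ Finset.range (RG n ω), XR i ω :=
          Finset.sum_le_sum_of_subset_of_nonneg (Finset.range_subset_range.2 hk₀le)
            (fun i _ _ => (hbR i ω).1)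
        have mono2 : (∑ j ∈ Finset.range (n - RG n ω), XS j ω)
            ≤ ∑ j ∈ Finset.range (n - k₀), XS j ω :=
          Finset.sum_le_sum_of_subset_of_nonneg (Finset.range_subset_range.2 (by omega))
            (fun j _ _ => (hbS j ω).1)
        linarith
      · -- lower tail: n - RG n ω ≥ k₀
        right
        have hjcast : ((n - RG n ω : ℕ) : ℝ) = (n:ℝ) - RG n ω := by
          push_cast [Nat.cast_sub hRGn]; ring
        have hgtk : (n:ℝ) / 2 + t * Real.sqrt n < ((n - RG n ω : ℕ) : ℝ) := by
          rw [hjcast]; linarith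
        have hk₀le : k₀ ≤ n - RG n ω := by
          have : Nat.floor ((n:ℝ) / 2 + t * Real.sqrt n) < n - RG n ω :=
            (Nat.floor_lt htn0).2 (by exact_mod_cast hgtk)
          omega
        have hs := (sandwich n ω).2
        have mono1 : (∑ i ∈ Finset.range k₀, XS i ω)
            ≤ ∑ j ∈ Finset.range (n - RG n ω), XS j ω :=
          Finset.sum_le_sum_of_subset_of_nonneg (Finset.range_subset_range.2 hk₀le)
            (fun j _ _ => (hbS j ω).1)
        have mono2 : (∑ i ∈ Finset.range (RG n ω), XR i ω)
            ≤ ∑ j ∈ Finset.range (n - k₀), XR j ω :=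
          Finset.sum_le_sum_of_subset_of_nonneg (Finset.range_subset_range.2 (by omega))
            (fun i _ _ => (hbR i ω).1)
        linarith
    have hexple : Real.exp (-ε ^ 2 / (2 * n * γ ^ 2))
        ≤ Real.exp (-(μ / (2 * γ)) ^ 2 * t) := by
      rw [Real.exp_le_exp]
      have hε2 : ε ^ 2 = t ^ 2 * μ ^ 2 * n := by
        rw [hε_def]
        rw [mul_pow, mul_pow, Real.sq_sqrt (by positivity : (0:ℝ) ≤ (n:ℝ))]
      have hne : (n:ℝ) ≠ 0 := by positivity
      have heq1 : -ε ^ 2 / (2 * n * γ ^ 2) = -(t ^ 2 * μ ^ 2 / (2 * γ ^ 2)) := by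
        rw [hε2]; field_simp
      have heq2 : -(μ / (2 * γ)) ^ 2 * t = -(t * μ ^ 2 / (4 * γ ^ 2)) := by
        field_simp; ring
      rw [heq1, heq2, neg_le_neg_iff]
      rw [div_le_div_iff₀ (by positivity) (by positivity)]
      have htt : t ≤ t ^ 2 := by nlinarith
      have hprod : 0 ≤ μ ^ 2 * γ ^ 2 := by positivity
      have h1 : t * (μ ^ 2 * γ ^ 2) ≤ t ^ 2 * (μ ^ 2 * γ ^ 2) :=
        mul_le_mul_of_nonneg_right htt hprod
      nlinarith [mul_le_mul_of_nonneg_right (le_trans ht htt) hprod]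
    calc P {ω | t * Real.sqrt n < |(RG n ω : ℝ) - n / 2|}
        ≤ P ({ω | (∑ i ∈ Finset.range k₀, XR i ω)
            ≤ (∑ j ∈ Finset.range (n - k₀), XS j ω) + γ}
          ∪ {ω | (∑ i ∈ Finset.range k₀, XS i ω)
            ≤ (∑ j ∈ Finset.range (n - k₀), XR j ω) + γ}) := measure_mono hsubset
      _ ≤ P {ω | (∑ i ∈ Finset.range k₀, XR i ω)
            ≤ (∑ j ∈ Finset.range (n - k₀), XS j ω) + γ}
          + P {ω | (∑ i ∈ Finset.range k₀, XS i ω)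
            ≤ (∑ j ∈ Finset.range (n - k₀), XR j ω) + γ} := measure_union_le _ _
      _ ≤ ENNReal.ofReal (Real.exp (-(μ / (2 * γ)) ^ 2 * t))
          + ENNReal.ofReal (Real.exp (-(μ / (2 * γ)) ^ 2 * t)) :=
          add_le_add (hB1.trans (ENNReal.ofReal_le_ofReal hexple))
            (hB2.trans (ENNReal.ofReal_le_ofReal hexple))
      _ = ENNReal.ofReal (2 * Real.exp (-(μ / (2 * γ)) ^ 2 * t)) := by
          rw [← ENNReal.ofReal_add (Real.exp_nonneg _) (Real.exp_nonneg _)]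
          congr 1
          ring
  · -- degenerate case: the event is empty
    push_neg at hdeg
    have hempty : {ω | t * Real.sqrt n < |(RG n ω : ℝ) - n / 2|} = ∅ := by
      rw [Set.eq_empty_iff_forall_notMem]
      intro ω hω
      simp only [Set.mem_setOf_eq] at hω
      have h1 : (RG n ω : ℝ) ≤ n := by exact_mod_cast RG_le n ω
      have h2 : (0:ℝ) ≤ RG n ω := Nat.cast_nonneg _
      have h3 : (n:ℝ) / 2 ≤ t * Real.sqrt n := by linarith
      have : |(RG n ω : ℝ) - n / 2| ≤ t * Real.sqrt n :=
        abs_le.2 ⟨by linarith, by linarith⟩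
      linarith
    rw [hempty, measure_empty]
    exact zero_le
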